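/- Let Y = {y_1,...,y_m} and define SMQSym := x_{[m]^ε,0} k[X_0] ⊗ WMQSym with basis M̄_{(w,𝐰)} = x_{w,0} M_𝐰, product M̄_{(u_0,𝐰_1)} M̄_{(v_0,𝐰_2)} = M̄_{(u_0·v_0, 𝐰_1 * 𝐰_2)}, and linear operator P(M̄_{(w,𝐰)}) = M̄_{([m]^ε, w, 𝐰)}. Then (SMQSym, P), with the embedding y_i ↦ x_{1,0}^ε...x_{i-1,0}^ε x_{i,0} x_{i+1,0}^ε...x_{m,0}^ε, is the free commutative Rota-Baxter algebra of weight 1 on Y; equivalently, the map M̄_{(w_0,w_1,...,w_n)} ↦ θ(w_0)⊗θ(w_1)⊗...⊗θ(w_n) is an isomorphism of Rota-Baxter algebras onto (Ш_k(k[Y]), ◇, P_{k[Y]}). -/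

import Mathlib

open scoped TensorProduct

/-- `Ñ = ℕ ⊔ {ε}` modelled as `Option ℕ` (`none = ε`), with its addition. -/
def nadd : Option ℕ → Option ℕ → Option ℕ
  | none, none => none
  | none, some n => if n = 0 then none else some n
  | some n, none => if n = 0 then none else some n
  | some a, some b => some (a + b)

/-- The quasi-shuffle product of two words over an alphabet `C` with a binary
operation `op`, with values in the free `k`-module on words. -/
noncomputable def qsh {k : Type*} [CommRing k] {C : Type*} (op : C → C → C) :
    List C → List C → (List C →₀ k)
  | [], y => Finsupp.single y 1
  | x, [] => Finsupp.single x 1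
  | a :: x, b :: y =>
      (qsh op x (b :: y)).mapDomain (a :: ·) + (qsh op (a :: x) y).mapDomain (b :: ·) +
        (qsh op x y).mapDomain (op a b :: ·)
  termination_by x y => x.length + y.length
  decreasing_by all_goals simp [List.length_cons] <;> omega

/-- `θ` applied to a column: the monomial `y_1^{θ(w(1))} ⋯ y_m^{θ(w(m))}` in
`k[Y] = k[y_1,…,y_m]`, where `θ(ε) = 0`. -/
noncomputable def thetaPoly (k : Type*) [CommRing k] (m : ℕ)
    (c : Fin m → Option ℕ) : MvPolynomial (Fin m) k :=
  ∏ i : Fin m, MvPolynomial.X i ^ (c i).getD 0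

/-- The pure tensor `θ(w_1) ⊗ ⋯ ⊗ θ(w_n)` in `QS(k[Y])`. -/
noncomputable def ptTheta (k : Type*) [CommRing k] (m : ℕ)
    (w : List (Fin m → Option ℕ)) : TensorAlgebra k (MvPolynomial (Fin m) k) :=
  (w.map fun c => TensorAlgebra.ι k (thetaPoly k m c)).prod

/-- The index set of the basis `M̄_{(w_0, w_1, …, w_n)}` of `SMQSym`:
pairs `(w_0, 𝐰)` of a column `w_0 : [m] → P̃` and a weak multi-composition
`𝐰` (all columns taking values in `P̃ = P ⊔ {ε}`, i.e. never `0`). -/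
def SIdx (m : ℕ) : Type :=
  {p : (Fin m → Option ℕ) × List (Fin m → Option ℕ) //
    (∀ i, p.1 i ≠ some 0) ∧ ∀ c ∈ p.2, ∀ i, c i ≠ some 0}

/-- The linear map `M̄_{(w_0,w_1,…,w_n)} ↦ θ(w_0) ⊗ θ(w_1) ⊗ ⋯ ⊗ θ(w_n)` from
`SMQSym` (the free module on `SIdx`) to `Ш_k(k[Y]) = k[Y] ⊗ QS(k[Y])`. -/
noncomputable def Psi (k : Type*) [CommRing k] (m : ℕ) (f : SIdx m →₀ k) :
    MvPolynomial (Fin m) k ⊗[k] TensorAlgebra k (MvPolynomial (Fin m) k) :=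
  f.sum fun p c => c • (thetaPoly k m p.1.1 ⊗ₜ ptTheta k m p.1.2)


section Aux

lemma getD_nadd (a b : Option ℕ) : (nadd a b).getD 0 = a.getD 0 + b.getD 0 := by
  rcases a with _ | a <;> rcases b with _ | b <;> simp [nadd] <;> split <;> simp_all

lemma thetaPoly_mul {k : Type*} [CommRing k] {m : ℕ} (u v : Fin m → Option ℕ) :
    thetaPoly k m (fun i => nadd (u i) (v i)) = thetaPoly k m u * thetaPoly k m v := by
  simp [thetaPoly, getD_nadd, pow_add, Finset.prod_mul_distrib]

lemma thetaPoly_none {k : Type*} [CommRing k] {m : ℕ} :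
    thetaPoly k m (fun _ => (none : Option ℕ)) = 1 := by
  simp [thetaPoly]

lemma ptTheta_nil {k : Type*} [CommRing k] {m : ℕ} : ptTheta k m [] = 1 := rfl

lemma ptTheta_cons {k : Type*} [CommRing k] {m : ℕ} (a : Fin m → Option ℕ)
    (w : List (Fin m → Option ℕ)) :
    ptTheta k m (a :: w) = TensorAlgebra.ι k (thetaPoly k m a) * ptTheta k m w := by
  simp [ptTheta]

/-- the linear extension of `ptTheta` -/
noncomputable def qsum (k : Type*) [CommRing k] (m : ℕ)
    (f : List (Fin m → Option ℕ) →₀ k) : TensorAlgebra k (MvPolynomial (Fin m) k) :=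
  f.sum fun z c => c • ptTheta k m z

lemma qsum_mapDomain_cons {k : Type*} [CommRing k] {m : ℕ} (a : Fin m → Option ℕ)
    (f : List (Fin m → Option ℕ) →₀ k) :
    qsum k m (f.mapDomain (a :: ·)) = TensorAlgebra.ι k (thetaPoly k m a) * qsum k m f := by
  rw [qsum, Finsupp.sum_mapDomain_index (by simp) (by simp [add_smul]), qsum, Finsupp.mul_sum]
  refine Finsupp.sum_congr fun z _ => ?_
  rw [ptTheta_cons, mul_smul_comm]

lemma qsum_single {k : Type*} [CommRing k] {m : ℕ} (z : List (Fin m → Option ℕ)) :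
    qsum k m (Finsupp.single z 1) = ptTheta k m z := by
  rw [qsum, Finsupp.sum_single_index (by simp), one_smul]

lemma mqs_ptTheta {k : Type*} [CommRing k] {m : ℕ}
    (mqs : TensorAlgebra k (MvPolynomial (Fin m) k) →ₗ[k]
      TensorAlgebra k (MvPolynomial (Fin m) k) →ₗ[k]
        TensorAlgebra k (MvPolynomial (Fin m) k))
    (hleft : ∀ x, mqs 1 x = x) (hright : ∀ x, mqs x 1 = x)
    (hrec : ∀ (a b : MvPolynomial (Fin m) k)
        (x y : TensorAlgebra k (MvPolynomial (Fin m) k)),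
      mqs (TensorAlgebra.ι k a * x) (TensorAlgebra.ι k b * y) =
        TensorAlgebra.ι k a * mqs x (TensorAlgebra.ι k b * y) +
          TensorAlgebra.ι k b * mqs (TensorAlgebra.ι k a * x) y +
          TensorAlgebra.ι k (a * b) * mqs x y)
    (x y : List (Fin m → Option ℕ)) :
    mqs (ptTheta k m x) (ptTheta k m y) =
      qsum k m (qsh (k := k) (fun a b i => nadd (a i) (b i)) x y) := by
  induction x, y using qsh.induct (C := Fin m → Option ℕ) with
  | case1 y => rw [ptTheta_nil, hleft, qsh, qsum_single]
  | case2 x hx =>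
      obtain - | ⟨a, x⟩ := x
      · exact absurd rfl hx
      · rw [ptTheta_nil, hright, qsh, qsum_single]
        exact hx
  | case3 a x b y ih1 ih2 ih3 =>
      rw [ptTheta_cons, ptTheta_cons, hrec, qsh]
      rw [qsum, Finsupp.sum_add_index (by simp) (by simp [add_smul]),
        Finsupp.sum_add_index (by simp) (by simp [add_smul])]
      rw [← qsum, ← qsum, ← qsum, qsum_mapDomain_cons, qsum_mapDomain_cons, qsum_mapDomain_cons]
      rw [← ih1, ← ih2, ← ih3, ← ptTheta_cons, ← ptTheta_cons, thetaPoly_mul]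

lemma equivMAFM_prod {R X : Type*} [CommSemiring R] (l : List X) :
    FreeAlgebra.equivMonoidAlgebraFreeMonoid (R := R) (X := X) ((l.map (FreeAlgebra.ι R)).prod) =
      MonoidAlgebra.single (FreeMonoid.ofList l) 1 := by
  induction l with
  | nil => simp [MonoidAlgebra.one_def]
  | cons a t ih =>
      rw [List.map_cons, List.prod_cons, map_mul, ih]
      have h : FreeAlgebra.equivMonoidAlgebraFreeMonoid (R := R) (FreeAlgebra.ι R a) =
          MonoidAlgebra.single (FreeMonoid.of a) 1 := by
        simp [FreeAlgebra.equivMonoidAlgebraFreeMonoid]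
      rw [h, MonoidAlgebra.single_mul_single, one_mul]
      rfl

lemma basisFreeMonoid_apply {R X : Type*} [CommSemiring R] (l : List X) :
    FreeAlgebra.basisFreeMonoid R X (FreeMonoid.ofList l) = (l.map (FreeAlgebra.ι R)).prod := by
  rw [FreeAlgebra.basisFreeMonoid, Module.Basis.map_apply]
  show (FreeAlgebra.equivMonoidAlgebraFreeMonoid (R := R) (X := X)).symm.toLinearEquiv
      (MonoidAlgebra.single (FreeMonoid.ofList l) 1) = _
  rw [AlgEquiv.toLinearEquiv_apply]
  exact (AlgEquiv.symm_apply_eq _).mpr (equivMAFM_prod l).symm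

lemma basis_tensorAlgebra_apply {κ R M : Type*} [CommSemiring R] [AddCommMonoid M] [Module R M]
    (b : Module.Basis κ R M) (l : List κ) :
    b.tensorAlgebra (FreeMonoid.ofList l) = (l.map fun i => TensorAlgebra.ι R (b i)).prod := by
  rw [Module.Basis.tensorAlgebra, Module.Basis.map_apply, AlgEquiv.toLinearEquiv_apply, basisFreeMonoid_apply,
    map_list_prod]
  simp [List.map_map, Function.comp_def]

noncomputable def colToExp (m : ℕ) (c : Fin m → Option ℕ) : Fin m →₀ ℕ :=
  Finsupp.equivFunOnFinite.symm fun i => (c i).getD 0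

def expToCol (m : ℕ) (e : Fin m →₀ ℕ) : Fin m → Option ℕ :=
  fun i => if e i = 0 then none else some (e i)

lemma colToExp_apply (m : ℕ) (c : Fin m → Option ℕ) (i : Fin m) :
    colToExp m c i = (c i).getD 0 := rfl

lemma expToCol_ne (m : ℕ) (e : Fin m →₀ ℕ) (i : Fin m) : expToCol m e i ≠ some 0 := by
  unfold expToCol; split <;> simp_all

lemma expToCol_colToExp (m : ℕ) (c : Fin m → Option ℕ) (h : ∀ i, c i ≠ some 0) :
    expToCol m (colToExp m c) = c := by
  funext i
  rw [expToCol, colToExp_apply]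
  cases hc : c i with
  | none => simp
  | some n =>
      have : n ≠ 0 := fun h0 => h i (h0 ▸ hc)
      simp [this]

lemma colToExp_expToCol (m : ℕ) (e : Fin m →₀ ℕ) : colToExp m (expToCol m e) = e := by
  ext i
  rw [colToExp_apply, expToCol]
  split <;> simp_all

noncomputable def SIdxEquiv (m : ℕ) : SIdx m ≃ (Fin m →₀ ℕ) × FreeMonoid (Fin m →₀ ℕ) where
  toFun p := (colToExp m p.1.1, FreeMonoid.ofList (p.1.2.map (colToExp m)))
  invFun q := ⟨(expToCol m q.1, (FreeMonoid.toList q.2).map (expToCol m)),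
    ⟨fun i => expToCol_ne m q.1 i, fun c hc i => by
      obtain ⟨e, -, rfl⟩ := List.mem_map.mp hc
      exact expToCol_ne m e i⟩⟩
  left_inv p := by
    obtain ⟨⟨c, w⟩, h1, h2⟩ := p
    apply Subtype.ext
    dsimp
    refine Prod.ext (expToCol_colToExp m c h1) ?_
    dsimp
    rw [List.map_map]
    simp only [Function.comp_def]
    rw [List.map_congr_left fun x hx => ?_, List.map_id]
    exact expToCol_colToExp m x (h2 x hx)
  right_inv q := by
    refine Prod.ext (colToExp_expToCol m q.1) ?_
    dsimp
    rw [List.map_map]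
    simp only [Function.comp_def]
    rw [List.map_congr_left fun x _ => colToExp_expToCol m x, List.map_id']
    exact FreeMonoid.toList.symm_apply_apply q.2

lemma thetaPoly_eq {k : Type*} [CommRing k] (m : ℕ) (c : Fin m → Option ℕ) :
    thetaPoly k m c = MvPolynomial.basisMonomials (Fin m) k (colToExp m c) := by
  rw [show (MvPolynomial.basisMonomials (Fin m) k) (colToExp m c) =
      MvPolynomial.monomial (colToExp m c) 1 from
      congrFun (MvPolynomial.coe_basisMonomials _ _) _,
    MvPolynomial.monomial_eq, map_one, one_mul, Finsupp.prod_pow]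
  rfl

lemma ptTheta_eq {k : Type*} [CommRing k] (m : ℕ) (w : List (Fin m → Option ℕ)) :
    ptTheta k m w = (MvPolynomial.basisMonomials (Fin m) k).tensorAlgebra
      (FreeMonoid.ofList (w.map (colToExp m))) := by
  rw [basis_tensorAlgebra_apply, List.map_map, ptTheta]
  simp only [Function.comp_def, ← thetaPoly_eq]

/-- The basis of `Ш_k(k[Y])` indexed by `SIdx m`. -/
noncomputable def SBasis (k : Type*) [CommRing k] (m : ℕ) :
    Module.Basis (SIdx m) k
      (MvPolynomial (Fin m) k ⊗[k] TensorAlgebra k (MvPolynomial (Fin m) k)) :=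
  ((MvPolynomial.basisMonomials (Fin m) k).tensorProduct
    ((MvPolynomial.basisMonomials (Fin m) k).tensorAlgebra)).reindex (SIdxEquiv m).symm

lemma SBasis_apply {k : Type*} [CommRing k] {m : ℕ} (p : SIdx m) :
    SBasis k m p = thetaPoly k m p.1.1 ⊗ₜ ptTheta k m p.1.2 := by
  rw [SBasis, Module.Basis.reindex_apply, Equiv.symm_symm, Module.Basis.tensorProduct_apply',
    thetaPoly_eq, ptTheta_eq]
  rfl

lemma Psi_eq (k : Type*) [CommRing k] (m : ℕ) : Psi k m = ⇑(SBasis k m).repr.symm := by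
  funext f
  rw [Module.Basis.repr_symm_apply, Finsupp.linearCombination_apply, Psi]
  exact Finsupp.sum_congr fun p _ => by rw [SBasis_apply]

lemma Psi_single {k : Type*} [CommRing k] {m : ℕ} (p : SIdx m) :
    Psi k m (Finsupp.single p 1) = thetaPoly k m p.1.1 ⊗ₜ ptTheta k m p.1.2 := by
  rw [Psi, Finsupp.sum_single_index (by simp), one_smul]

end Aux

/-- `(SMQSym, P)`, with basis `M̄_{(w_0,𝐰)}`, product
`M̄_{(u_0,𝐰_1)} M̄_{(v_0,𝐰_2)} = M̄_{(u_0·v_0, 𝐰_1 * 𝐰_2)}`, the operator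
`P(M̄_{(w,𝐰)}) = M̄_{([m]^ε, w, 𝐰)}` and the embedding
`y_i ↦ x_{1,0}^ε ⋯ x_{i,0} ⋯ x_{m,0}^ε`, is the free commutative Rota–Baxter
algebra of weight `1` on `Y = {y_1,…,y_m}`: equivalently, the map
`M̄_{(w_0,w_1,…,w_n)} ↦ θ(w_0) ⊗ θ(w_1) ⊗ ⋯ ⊗ θ(w_n)` is an isomorphism of
Rota–Baxter algebras onto `(Ш_k(k[Y]), ◇, P_{k[Y]})`. -/
theorem stmt19 (k : Type*) [CommRing k] [Algebra ℚ k] (m : ℕ)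
    -- the quasi-shuffle product on QS(k[Y])
    (mqs : TensorAlgebra k (MvPolynomial (Fin m) k) →ₗ[k]
      TensorAlgebra k (MvPolynomial (Fin m) k) →ₗ[k]
        TensorAlgebra k (MvPolynomial (Fin m) k))
    (hleft : ∀ x, mqs 1 x = x) (hright : ∀ x, mqs x 1 = x)
    (hrec : ∀ (a b : MvPolynomial (Fin m) k)
        (x y : TensorAlgebra k (MvPolynomial (Fin m) k)),
      mqs (TensorAlgebra.ι k a * x) (TensorAlgebra.ι k b * y) =
        TensorAlgebra.ι k a * mqs x (TensorAlgebra.ι k b * y) +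
          TensorAlgebra.ι k b * mqs (TensorAlgebra.ι k a * x) y +
          TensorAlgebra.ι k (a * b) * mqs x y)
    -- the product ◇ of Ш_k(k[Y]) = k[Y] ⊗ QS(k[Y])
    (d : (MvPolynomial (Fin m) k ⊗[k] TensorAlgebra k (MvPolynomial (Fin m) k)) →ₗ[k]
      (MvPolynomial (Fin m) k ⊗[k] TensorAlgebra k (MvPolynomial (Fin m) k)) →ₗ[k]
        (MvPolynomial (Fin m) k ⊗[k] TensorAlgebra k (MvPolynomial (Fin m) k)))
    (hd : ∀ (a b : MvPolynomial (Fin m) k)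
        (x y : TensorAlgebra k (MvPolynomial (Fin m) k)),
      d (a ⊗ₜ x) (b ⊗ₜ y) = (a * b) ⊗ₜ mqs x y)
    -- the Rota-Baxter operator P_{k[Y]} : 𝐚 ↦ 1 ⊗ 𝐚 of Ш_k(k[Y])
    (P : (MvPolynomial (Fin m) k ⊗[k] TensorAlgebra k (MvPolynomial (Fin m) k)) →ₗ[k]
      (MvPolynomial (Fin m) k ⊗[k] TensorAlgebra k (MvPolynomial (Fin m) k)))
    (hP : ∀ (a : MvPolynomial (Fin m) k)
        (x : TensorAlgebra k (MvPolynomial (Fin m) k)),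
      P (a ⊗ₜ x) = (1 : MvPolynomial (Fin m) k) ⊗ₜ (TensorAlgebra.ι k a * x)) :
    -- Ψ is a linear bijection
    Function.Bijective (Psi k m) ∧
    -- Ψ transforms the product of SMQSym into ◇
    (∀ p q : SIdx m,
      d (Psi k m (Finsupp.single p 1)) (Psi k m (Finsupp.single q 1)) =
        (qsh (k := k) (fun a b i => nadd (a i) (b i)) p.1.2 q.1.2).sum
          fun z c => c • (thetaPoly k m (fun i => nadd (p.1.1 i) (q.1.1 i)) ⊗ₜ
            ptTheta k m z)) ∧
    -- Ψ intertwines the Rota-Baxter operators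
    (∀ p : SIdx m,
      P (Psi k m (Finsupp.single p 1)) =
        thetaPoly k m (fun _ => (none : Option ℕ)) ⊗ₜ
          ptTheta k m (p.1.1 :: p.1.2)) ∧
    -- the embedding of Y
    (∀ i : Fin m,
      Psi k m (Finsupp.single
        ⟨((fun j => if j = i then some 1 else none), []),
          ⟨fun j => by dsimp only; split <;> simp, fun c hc => absurd hc List.not_mem_nil⟩⟩ 1) =
        (MvPolynomial.X i : MvPolynomial (Fin m) k) ⊗ₜ 1) := by
  refine ⟨?_, ?_, ?_, ?_⟩
  · rw [Psi_eq k m]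
    exact (SBasis k m).repr.symm.bijective
  · intro p q
    rw [Psi_single, Psi_single, hd, mqs_ptTheta mqs hleft hright hrec]
    rw [qsum, Finsupp.sum, TensorProduct.tmul_sum, Finsupp.sum]
    refine Finset.sum_congr rfl fun z _ => ?_
    rw [thetaPoly_mul, TensorProduct.tmul_smul]
  · intro p
    rw [Psi_single, hP, ← ptTheta_cons, thetaPoly_none]
  · intro i
    refine (Psi_single _).trans ?_
    congr 1
    rw [thetaPoly, Finset.prod_eq_single i (fun j _ hj => by simp [hj]) (by simp)]
    simp
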